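/- Let K be a field equipped with an additive valuation v : K → ℝ ∪ {∞} (meaning v(a) = ∞ if and only if a = 0, v(ab) = v(a) + v(b), and v(a+b) ≥ min(v(a), v(b))). Let n ≥ 0 and w : Fin (n+1) → ℝ. Then for every invertible (n+1)×(n+1) matrix g over K one has ∑_i min_j (v(g_{ij}) + w_j) ≤ ∑_j w_j + v(det g), with equality when g is the identity matrix. Consequently, the supremum over all invertible matrices g of the quantity ∑_i min_j (v(g_{ij}) + w_j) − v(det g) equals ∑_j w_j. -/

import Mathlib

section aux

variable {K : Type*} [Field K] (v : K → EReal)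
    (htop : ∀ a : K, v a = ⊤ ↔ a = 0)
    (hbot : ∀ a : K, v a ≠ ⊥)
    (hmul : ∀ a b : K, v (a * b) = v a + v b)
    (hadd : ∀ a b : K, min (v a) (v b) ≤ v (a + b))

include htop hbot hmul in
lemma v_one : v 1 = 0 := by
  have h := hmul 1 1
  rw [one_mul] at h
  have ht : v 1 ≠ ⊤ := by simp [htop]
  have hr : (((v 1).toReal : ℝ) : EReal) = v 1 := EReal.coe_toReal ht (hbot 1)
  rw [← hr] at h ⊢
  have : (v 1).toReal = (v 1).toReal + (v 1).toReal := by exact_mod_cast h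
  have h0 : (v 1).toReal = 0 := by linarith
  rw [h0]; rfl

include htop hbot hmul in
lemma v_neg_one : v (-1 : K) = 0 := by
  have h := hmul (-1) (-1)
  rw [neg_one_mul, neg_neg, v_one v htop hbot hmul] at h
  have ht : v (-1 : K) ≠ ⊤ := by simp [htop]
  have hr : (((v (-1:K)).toReal : ℝ) : EReal) = v (-1:K) := EReal.coe_toReal ht (hbot _)
  rw [← hr] at h ⊢
  have : (v (-1:K)).toReal + (v (-1:K)).toReal = (0:ℝ) := by exact_mod_cast h.symm
  have h0 : (v (-1:K)).toReal = 0 := by linarith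
  rw [h0]; rfl

include htop hbot hmul in
lemma v_prod {α : Type*} (s : Finset α) (f : α → K) :
    v (∏ x ∈ s, f x) = ∑ x ∈ s, v (f x) := by
  classical
  induction s using Finset.induction with
  | empty => simpa using v_one v htop hbot hmul
  | @insert a s ha ih => rw [Finset.prod_insert ha, Finset.sum_insert ha, hmul, ih]

include hadd in
lemma v_sum_ge {α : Type*} (s : Finset α) (f : α → K) (hs : s.Nonempty) :
    ∃ a ∈ s, v (f a) ≤ v (∑ x ∈ s, f x) := by
  classical
  induction hs using Finset.Nonempty.cons_induction with
  | singleton a => exact ⟨a, by simp⟩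
  | cons a s ha hs ih =>
      rw [Finset.sum_cons]
      rcases le_total (v (f a)) (v (∑ x ∈ s, f x)) with h | h
      · exact ⟨a, Finset.mem_cons_self a s, le_trans (by simp [h]) (hadd _ _)⟩
      · obtain ⟨b, hb, hvb⟩ := ih
        exact ⟨b, Finset.mem_cons_of_mem hb,
          hvb.trans (le_trans (by simp [h]) (hadd _ _))⟩

lemma ereal_coe_sum {α : Type*} (s : Finset α) (f : α → ℝ) :
    ((∑ x ∈ s, f x : ℝ) : EReal) = ∑ x ∈ s, (f x : EReal) := by
  induction s using Finset.cons_induction with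
  | empty => simp
  | cons a s ha ih => rw [Finset.sum_cons, Finset.sum_cons, EReal.coe_add, ih]

end aux

/-- Lemma 4.2(i) of the paper made explicit.  Let `v` be an additive valuation on a field
`K` (with values in `ℝ ∪ {∞}`, encoded in `EReal` via the hypothesis `v a ≠ ⊥`), `n ≥ 0`
and `w : Fin (n+1) → ℝ`.  For every invertible `(n+1)×(n+1)` matrix `g` over `K` one has
`∑_i min_j (v(g_{ij}) + w_j) ≤ ∑_j w_j + v(det g)`, with equality when `g` is the identity
matrix.  Consequently, the supremum over all invertible `g` of
`∑_i min_j (v(g_{ij}) + w_j) − v(det g)` equals `∑_j w_j`. -/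
theorem stmt6 {K : Type*} [Field K] (n : ℕ) (v : K → EReal)
    (htop : ∀ a : K, v a = ⊤ ↔ a = 0)
    (hbot : ∀ a : K, v a ≠ ⊥)
    (hmul : ∀ a b : K, v (a * b) = v a + v b)
    (hadd : ∀ a b : K, min (v a) (v b) ≤ v (a + b))
    (w : Fin (n+1) → ℝ) :
    (∀ g : Matrix (Fin (n+1)) (Fin (n+1)) K, IsUnit g.det →
      (∑ i, ⨅ j, (v (g i j) + (w j : EReal))) ≤ (∑ j, (w j : EReal)) + v g.det) ∧
    ((∑ i, ⨅ j, (v ((1 : Matrix (Fin (n+1)) (Fin (n+1)) K) i j) + (w j : EReal))) =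
      (∑ j, (w j : EReal)) + v (Matrix.det (1 : Matrix (Fin (n+1)) (Fin (n+1)) K))) ∧
    sSup {x : EReal | ∃ g : Matrix (Fin (n+1)) (Fin (n+1)) K, IsUnit g.det ∧
        x = (∑ i, ⨅ j, (v (g i j) + (w j : EReal))) - v g.det} =
      ∑ j, (w j : EReal) := by
  classical
  have hv1 : v 1 = 0 := v_one v htop hbot hmul
  -- Part 1
  have part1 : ∀ g : Matrix (Fin (n+1)) (Fin (n+1)) K,
      (∑ i, ⨅ j, (v (g i j) + (w j : EReal))) ≤ (∑ j, (w j : EReal)) + v g.det := by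
    intro g
    by_cases hdet : g.det = 0
    · rw [hdet, (htop 0).mpr rfl]
      have : (∑ j, (w j : EReal)) = ((∑ j, w j : ℝ) : EReal) := by
        exact (ereal_coe_sum _ _).symm
      rw [this]
      exact le_of_le_of_eq le_top (EReal.add_top_of_ne_bot (EReal.coe_ne_bot _)).symm
    -- det is a sum over permutations; pick a permutation whose term has minimal valuation
    rw [Matrix.det_apply']
    obtain ⟨σ, _, hσ⟩ := v_sum_ge v hadd Finset.univ
      (fun σ : Equiv.Perm (Fin (n+1)) => (Equiv.Perm.sign σ : ℤ) * ∏ i, g (σ i) i)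
      Finset.univ_nonempty
    have hsign : v (((Equiv.Perm.sign σ : ℤ) : K)) = 0 := by
      rcases Int.units_eq_one_or (Equiv.Perm.sign σ) with h | h <;> rw [h] <;> push_cast
      · exact hv1
      · exact v_neg_one v htop hbot hmul
    have hterm : v ((Equiv.Perm.sign σ : ℤ) * ∏ i, g (σ i) i)
        = ∑ i, v (g (σ i) i) := by
      rw [hmul, hsign, zero_add, v_prod v htop hbot hmul]
    rw [hterm] at hσ
    calc (∑ i, ⨅ j, (v (g i j) + (w j : EReal)))
        = ∑ i, ⨅ j, (v (g (σ i) j) + (w j : EReal)) :=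
          (Equiv.sum_comp σ (fun i => ⨅ j, (v (g i j) + (w j : EReal)))).symm
      _ ≤ ∑ i, (v (g (σ i) i) + (w i : EReal)) :=
          Finset.sum_le_sum (fun i _ => iInf_le _ i)
      _ = (∑ i, v (g (σ i) i)) + ∑ i, (w i : EReal) := Finset.sum_add_distrib
      _ ≤ v (∑ τ : Equiv.Perm (Fin (n+1)),
            ((Equiv.Perm.sign τ : ℤ) : K) * ∏ i, g (τ i) i) + ∑ i, (w i : EReal) :=
          add_le_add hσ le_rfl
      _ = (∑ j, (w j : EReal)) + _ := add_comm _ _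
  -- Part 2
  have part2 : (∑ i, ⨅ j, (v ((1 : Matrix (Fin (n+1)) (Fin (n+1)) K) i j) + (w j : EReal))) =
      (∑ j, (w j : EReal)) + v (Matrix.det (1 : Matrix (Fin (n+1)) (Fin (n+1)) K)) := by
    have hrow : ∀ i : Fin (n+1),
        (⨅ j, (v ((1 : Matrix (Fin (n+1)) (Fin (n+1)) K) i j) + (w j : EReal))) = (w i : EReal) := by
      intro i
      apply le_antisymm
      · refine le_trans (iInf_le _ i) ?_
        simp [Matrix.one_apply_eq, hv1]
      · refine le_iInf fun j => ?_
        by_cases hij : i = j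
        · subst hij; simp [Matrix.one_apply_eq, hv1]
        · rw [Matrix.one_apply_ne hij, (htop 0).mpr rfl]
          exact le_of_le_of_eq le_top (EReal.top_add_of_ne_bot (EReal.coe_ne_bot (w j))).symm
    rw [Matrix.det_one, hv1, add_zero]
    exact Finset.sum_congr rfl fun i _ => hrow i
  refine ⟨fun g _ => part1 g, part2, ?_⟩
  -- Part 3
  apply le_antisymm
  · apply sSup_le
    rintro x ⟨g, hg, rfl⟩
    have hdet : g.det ≠ 0 := hg.ne_zero
    have hdt : v g.det ≠ ⊤ := fun h => hdet ((htop _).mp h)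
    have hr : (((v g.det).toReal : ℝ) : EReal) = v g.det := EReal.coe_toReal hdt (hbot _)
    have h1 := part1 g
    rw [← hr] at h1 ⊢
    calc (∑ i, ⨅ j, (v (g i j) + (w j : EReal))) - (((v g.det).toReal : ℝ) : EReal)
        ≤ ((∑ j, (w j : EReal)) + ((v g.det).toReal : EReal)) - ((v g.det).toReal : EReal) :=
          EReal.sub_le_sub h1 le_rfl
      _ = ∑ j, (w j : EReal) := EReal.add_sub_cancel_right
  · apply le_sSup
    refine ⟨1, by simp, ?_⟩
    rw [part2, Matrix.det_one, hv1, add_zero, sub_zero]
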